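/- Let b ~ N(β, se²) with se > 0, β ≠ 0, and let c > 0. The relative conditional bias (E(|b| ∣ |b|/se > c) − |β|)/|β| is strictly positive and the exaggeration factor E(|b| ∣ |b|/se > c)/|β| is strictly greater than 1. Both quantities depend on β and se only through the signal-to-noise ratio SNR = |β|/se; both are decreasing functions of the SNR and increasing functions of c. -/

import Mathlib

open MeasureTheory ProbabilityTheory

/-- The Gaussian distribution with mean `m` and standard deviation `s`. -/
noncomputable def gauss (m s : ℝ) : Measure ℝ := gaussianReal m (Real.toNNReal (s ^ 2))

/-- The conditional mean `E(|b| ∣ |b|/se > c)` for `b ~ N(β, se²)`, where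
`E(X ∣ A) = E(X·1_A)/P(A)`. -/
noncomputable def condMean (β se c : ℝ) : ℝ :=
  (∫ x in {x : ℝ | c < |x| / se}, |x| ∂(gauss β se))
    / ((gauss β se) {x : ℝ | c < |x| / se}).toReal

/-- The relative conditional bias `(E(|b| ∣ |b|/se > c) − |β|)/|β|`. -/
noncomputable def relBias (β se c : ℝ) : ℝ := (condMean β se c - |β|) / |β|

/-- The exaggeration factor (type M error) `E(|b| ∣ |b|/se > c)/|β|`. -/
noncomputable def exagg (β se c : ℝ) : ℝ := condMean β se c / |β|

open Real Set Filter
open scoped NNReal ENNReal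

noncomputable def gpdf (x : ℝ) : ℝ := (Real.sqrt (2 * Real.pi))⁻¹ * Real.exp (-(x^2)/2)

noncomputable def QT (t : ℝ) : ℝ := ∫ x in Set.Ioi t, gpdf x

lemma gpdf_pos (x : ℝ) : 0 < gpdf x := by
  unfold gpdf; positivity

lemma gpdf_even (x : ℝ) : gpdf (-x) = gpdf x := by unfold gpdf; ring_nf

lemma continuous_gpdf : Continuous gpdf := by
  unfold gpdf; fun_prop

lemma gpdf_eq (x : ℝ) : gpdf x = (Real.sqrt (2 * Real.pi))⁻¹ * Real.exp (-(1/2 : ℝ) * x^2) := by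
  unfold gpdf; ring_nf

lemma integrable_gpdf : Integrable gpdf := by
  have h := (integrable_exp_neg_mul_sq (by norm_num : (0:ℝ) < 1/2)).const_mul (Real.sqrt (2 * Real.pi))⁻¹
  refine h.congr (Eventually.of_forall fun x => ?_)
  simp only [gpdf_eq]

lemma integrable_mul_gpdf : Integrable (fun x => x * gpdf x) := by
  have h := (integrable_mul_exp_neg_mul_sq (by norm_num : (0:ℝ) < 1/2)).const_mul (Real.sqrt (2 * Real.pi))⁻¹
  refine h.congr (Eventually.of_forall fun x => ?_)
  simp only [gpdf_eq]; ring

lemma hasDerivAt_neg_gpdf (x : ℝ) : HasDerivAt (fun y => -gpdf y) (x * gpdf x) x := by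
  have h1 : HasDerivAt (fun y : ℝ => -(y^2)/2) (-x) x := by
    have h := ((hasDerivAt_pow 2 x).fun_neg.div_const 2)
    refine h.congr_deriv ?_
    simp; ring
  have h2 := (h1.exp).const_mul (Real.sqrt (2 * Real.pi))⁻¹
  have h3 := h2.fun_neg
  refine h3.congr_deriv ?_
  unfold gpdf; ring



lemma tendsto_neg_gpdf : Tendsto (fun y => -gpdf y) atTop (nhds 0) := by
  have h2 : Tendsto (fun x:ℝ => x^2/2) atTop atTop :=
    (tendsto_pow_atTop (by norm_num)).atTop_div_const (by norm_num)
  have h3 : Tendsto (fun x:ℝ => Real.exp (-(x^2/2))) atTop (nhds 0) :=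
    Real.tendsto_exp_neg_atTop_nhds_zero.comp h2
  have h4 := (h3.const_mul (Real.sqrt (2 * Real.pi))⁻¹).neg
  have : Tendsto (fun y => -gpdf y) atTop (nhds (-((Real.sqrt (2 * Real.pi))⁻¹ * 0))) := by
    convert h4 using 2 with y
    unfold gpdf; ring_nf
  simpa using this

lemma integral_mul_gpdf_Ioi (t : ℝ) : ∫ x in Set.Ioi t, x * gpdf x = gpdf t := by
  have := integral_Ioi_of_hasDerivAt_of_tendsto' (f := fun y => -gpdf y)
    (f' := fun x => x * gpdf x) (a := t) (m := 0)
    (fun x _ => hasDerivAt_neg_gpdf x) integrable_mul_gpdf.integrableOn tendsto_neg_gpdf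
  simpa using this

lemma QT_pos (t : ℝ) : 0 < QT t := by
  rw [QT, setIntegral_pos_iff_support_of_nonneg_ae
    (Eventually.of_forall fun x => (gpdf_pos x).le) integrable_gpdf.integrableOn]
  have : Function.support gpdf ∩ Set.Ioi t = Set.Ioi t := by
    apply Set.inter_eq_self_of_subset_right
    intro x _; exact (gpdf_pos x).ne'
  rw [this]
  simp

lemma QT_antitone : Antitone QT := by
  intro a b hab
  exact setIntegral_mono_set integrable_gpdf.integrableOn
    (Eventually.of_forall fun x => (gpdf_pos x).le)
    (HasSubset.Subset.eventuallyLE (Set.Ioi_subset_Ioi hab))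

lemma mills (t : ℝ) : t * QT t < gpdf t := by
  have key : t * QT t = ∫ x in Set.Ioi t, t * gpdf x := by
    rw [QT, integral_const_mul]
  have hpos : 0 < ∫ x in Set.Ioi t, (x - t) * gpdf x := by
    rw [setIntegral_pos_iff_support_of_nonneg_ae]
    · have : Function.support (fun x => (x - t) * gpdf x) ∩ Set.Ioi t = Set.Ioi t := by
        apply Set.inter_eq_self_of_subset_right
        intro x hx
        exact mul_ne_zero (sub_ne_zero.mpr (ne_of_gt hx)) (gpdf_pos x).ne'
      rw [this]; simp
    · filter_upwards [ae_restrict_mem measurableSet_Ioi] with x hx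
      exact mul_nonneg (sub_nonneg.mpr (le_of_lt hx)) (gpdf_pos x).le
    · apply Integrable.integrableOn
      have : (fun x => (x - t) * gpdf x) = fun x => x * gpdf x - t * gpdf x := by
        funext x; ring
      rw [this]
      exact integrable_mul_gpdf.sub (integrable_gpdf.const_mul t)
  have hsplit : ∫ x in Set.Ioi t, (x - t) * gpdf x
      = (∫ x in Set.Ioi t, x * gpdf x) - ∫ x in Set.Ioi t, t * gpdf x := by
    rw [← integral_sub integrable_mul_gpdf.integrableOn
      ((integrable_gpdf.const_mul t).integrableOn)]
    congr 1; funext x; ring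
  rw [key]
  have := hpos
  rw [hsplit, integral_mul_gpdf_Ioi] at this
  linarith



lemma QT_eq_sub (a b : ℝ) (hab : a ≤ b) : QT a = (∫ x in a..b, gpdf x) + QT b := by
  rw [intervalIntegral.integral_of_le hab, QT, QT]
  rw [← setIntegral_union (Set.Ioc_disjoint_Ioi le_rfl) measurableSet_Ioi
    integrable_gpdf.integrableOn integrable_gpdf.integrableOn]
  rw [Set.Ioc_union_Ioi_eq_Ioi hab]

lemma QT_eq (t : ℝ) : QT t = QT 0 - ∫ x in (0:ℝ)..t, gpdf x := by
  rcases le_total 0 t with h | h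
  · rw [QT_eq_sub 0 t h]; ring
  · rw [QT_eq_sub t 0 h, intervalIntegral.integral_symm]; ring

lemma hasDerivAt_QT (t : ℝ) : HasDerivAt QT (-gpdf t) t := by
  have h : HasDerivAt (fun u => ∫ x in (0:ℝ)..u, gpdf x) (gpdf t) t :=
    intervalIntegral.integral_hasDerivAt_right
      (continuous_gpdf.intervalIntegrable 0 t)
      (continuous_gpdf.stronglyMeasurableAtFilter _ _)
      continuous_gpdf.continuousAt
  have h2 := (hasDerivAt_const t (QT 0)).fun_sub h
  refine HasDerivAt.congr_of_eventuallyEq ?_ (Eventually.of_forall fun u => (QT_eq u))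
  simpa using h2

noncomputable def Gm (t : ℝ) : ℝ := gpdf t - t * QT t
lemma Gm_pos (t : ℝ) : 0 < Gm t := sub_pos.mpr (mills t)

noncomputable def Afun (m c : ℝ) : ℝ := gpdf (c - m) + gpdf (c + m) + m * (QT (c - m) - QT (c + m))
noncomputable def Bfun (m c : ℝ) : ℝ := QT (c - m) + QT (c + m)
lemma Bfun_pos (m c : ℝ) : 0 < Bfun m c := add_pos (QT_pos _) (QT_pos _)

lemma Afun_even (m c : ℝ) : Afun (-m) c = Afun m c := by
  unfold Afun
  have h1 : c - -m = c + m := by ring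
  have h2 : c + -m = c - m := by ring
  rw [h1, h2]; ring

lemma Bfun_even (m c : ℝ) : Bfun (-m) c = Bfun m c := by
  unfold Bfun
  have h1 : c - -m = c + m := by ring
  have h2 : c + -m = c - m := by ring
  rw [h1, h2]; ring

lemma Afun_sub_cB (m c : ℝ) : Afun m c - c * Bfun m c = Gm (c - m) + Gm (c + m) := by
  unfold Afun Bfun Gm; ring

lemma Afun_gt_cB (m c : ℝ) : c * Bfun m c < Afun m c := by
  have := Gm_pos (c - m); have := Gm_pos (c + m)
  have h := Afun_sub_cB m c
  linarith

lemma gpdf_le_gpdf {x y : ℝ} (h : x^2 ≤ y^2) : gpdf y ≤ gpdf x := by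
  unfold gpdf
  apply mul_le_mul_of_nonneg_left _ (by positivity)
  apply Real.exp_le_exp.mpr
  linarith

lemma Afun_gt_mB (m c : ℝ) (hm : 0 < m) (hc : 0 < c) : m * Bfun m c < Afun m c := by
  have key : Afun m c - m * Bfun m c = gpdf (c - m) + gpdf (c + m) - 2 * m * QT (c + m) := by
    unfold Afun Bfun; ring
  have hQpos := QT_pos (c + m)
  rcases le_or_gt m c with h | h
  · -- 2m ≤ c+m so 2m QT(c+m) ≤ (c+m) QT(c+m) < gpdf(c+m)
    have h1 : 2 * m * QT (c + m) ≤ (c + m) * QT (c + m) := by nlinarith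
    have h2 := mills (c + m)
    have := gpdf_pos (c - m)
    linarith
  · -- m > c: 2m QT = (c+m)QT + (m−c)QT(c+m) ≤ gpdf(c+m) + (m−c)QT(m−c) < gpdf(c+m)+gpdf(m−c)
    have h2 := mills (c + m)
    have h3 : QT (c + m) ≤ QT (m - c) := QT_antitone (by linarith)
    have h4 := mills (m - c)
    have h5 : gpdf (m - c) = gpdf (c - m) := by
      rw [← gpdf_even (m - c)]; ring_nf
    have h6 : (m - c) * QT (c + m) ≤ (m - c) * QT (m - c) :=
      mul_le_mul_of_nonneg_left h3 (by linarith)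
    have hQmc := QT_pos (m - c)
    nlinarith



-- translation for set integrals over Ioi
lemma integral_Ioi_comp_sub (f : ℝ → ℝ) (a m : ℝ) :
    ∫ x in Set.Ioi a, f (x - m) = ∫ y in Set.Ioi (a - m), f y := by
  have hmp : MeasurePreserving (fun x : ℝ => x - m) volume volume := by
    constructor
    · exact (measurable_id.sub_const m)
    · simpa [sub_eq_add_neg] using map_add_right_eq_self (volume : Measure ℝ) (-m)
  have hemb : MeasurableEmbedding (fun x : ℝ => x - m) := by
    have : (fun x : ℝ => x - m) = fun x => x + (-m) := by funext x; ring
    rw [this]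
    exact (MeasurableEquiv.addRight (-m)).measurableEmbedding
  have hpre : (fun x : ℝ => x - m) ⁻¹' Set.Ioi (a - m) = Set.Ioi a := by
    ext x; simp [Set.mem_Ioi]
  have := hmp.setIntegral_preimage_emb hemb f (Set.Ioi (a - m))
  rw [hpre] at this
  exact this

lemma gaussianPDFReal_one_eq (m x : ℝ) : gaussianPDFReal m 1 x = gpdf (x - m) := by
  rw [gaussianPDFReal, gpdf]
  norm_num

lemma integrable_gpdf_sub (m : ℝ) : Integrable (fun x => gpdf (x - m)) := by
  have h := integrable_gaussianPDFReal m 1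
  refine h.congr (Eventually.of_forall fun x => ?_)
  rw [gaussianPDFReal_one_eq]

lemma integrable_mul_gpdf_sub (m : ℝ) : Integrable (fun x => x * gpdf (x - m)) := by
  have h1 : Integrable (fun x => (x - m) * gpdf (x - m)) := by
    have hmp : MeasurePreserving (fun x : ℝ => x - m) volume volume := by
      constructor
      · exact (measurable_id.sub_const m)
      · simpa [sub_eq_add_neg] using map_add_right_eq_self (volume : Measure ℝ) (-m)
    have hemb : MeasurableEmbedding (fun x : ℝ => x - m) := by
      have : (fun x : ℝ => x - m) = fun x => x + (-m) := by funext x; ring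
      rw [this]
      exact (MeasurableEquiv.addRight (-m)).measurableEmbedding
    exact (hmp.integrable_comp_emb hemb).mpr integrable_mul_gpdf
  have h2 := (integrable_gpdf_sub m).const_mul m
  have := h1.add h2
  refine this.congr (Eventually.of_forall fun x => ?_)
  simp only [Pi.add_apply]; ring

-- the two key integrals over Ioi a
lemma int_gpdf_Ioi (a m : ℝ) : ∫ x in Set.Ioi a, gpdf (x - m) = QT (a - m) := by
  rw [integral_Ioi_comp_sub gpdf a m, QT]

lemma int_mul_gpdf_Ioi (a m : ℝ) :
    ∫ x in Set.Ioi a, x * gpdf (x - m) = gpdf (a - m) + m * QT (a - m) := by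
  have key : ∫ x in Set.Ioi a, ((x - m) * gpdf (x - m) + m * gpdf (x - m))
      = (∫ x in Set.Ioi a, (x - m) * gpdf (x - m)) + ∫ x in Set.Ioi a, m * gpdf (x - m) := by
    apply integral_add
    · exact ((MeasurePreserving.integrable_comp_emb (by
        constructor
        · exact (measurable_id.sub_const m)
        · simpa [sub_eq_add_neg] using map_add_right_eq_self (volume : Measure ℝ) (-m))
        (by
          have : (fun x : ℝ => x - m) = fun x => x + (-m) := by funext x; ring
          rw [this]
          exact (MeasurableEquiv.addRight (-m)).measurableEmbedding)).mpr
          integrable_mul_gpdf).integrableOn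
    · exact ((integrable_gpdf_sub m).const_mul m).integrableOn
  have h0 : ∫ x in Set.Ioi a, x * gpdf (x - m)
      = ∫ x in Set.Ioi a, ((x - m) * gpdf (x - m) + m * gpdf (x - m)) := by
    congr 1; funext x; ring
  rw [h0, key]
  have h1 : ∫ x in Set.Ioi a, (x - m) * gpdf (x - m) = gpdf (a - m) := by
    rw [integral_Ioi_comp_sub (fun y => y * gpdf y) a m, integral_mul_gpdf_Ioi]
  have h2 : ∫ x in Set.Ioi a, m * gpdf (x - m) = m * QT (a - m) := by
    rw [integral_const_mul, int_gpdf_Ioi]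
  rw [h1, h2]



lemma tail_set_eq (c : ℝ) : {y : ℝ | c < |y|} = Set.Iio (-c) ∪ Set.Ioi c := by
  ext y
  simp only [Set.mem_setOf_eq, Set.mem_union, Set.mem_Iio, Set.mem_Ioi, lt_abs]
  constructor
  · rintro (h | h); · right; exact h
    · left; linarith
  · rintro (h | h); · right; linarith
    · left; exact h

lemma measurableSet_tail (c : ℝ) : MeasurableSet {y : ℝ | c < |y|} := by
  rw [tail_set_eq]; exact measurableSet_Iio.union measurableSet_Ioi

lemma int_Iio_gpdf (m c : ℝ) :
    ∫ x in Set.Iio (-c), gpdf (x - m) = QT (c + m) := by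
  rw [← integral_Iic_eq_integral_Iio, ← integral_comp_neg_Ioi]
  have h : ∀ x : ℝ, gpdf (-x - m) = gpdf (x + m) := by
    intro x
    rw [← gpdf_even (x + m)]; ring_nf
  calc ∫ x in Set.Ioi c, gpdf (-x - m) = ∫ x in Set.Ioi c, gpdf (x - (-m)) := by
        congr 1; funext x; rw [h x]; ring_nf
    _ = QT (c - (-m)) := int_gpdf_Ioi c (-m)
    _ = QT (c + m) := by ring_nf

lemma int_Iio_mul_gpdf (m c : ℝ) :
    ∫ x in Set.Iio (-c), (-x) * gpdf (x - m) = gpdf (c + m) - m * QT (c + m) := by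
  rw [← integral_Iic_eq_integral_Iio, ← integral_comp_neg_Ioi]
  calc ∫ x in Set.Ioi c, (-(-x)) * gpdf (-x - m)
      = ∫ x in Set.Ioi c, x * gpdf (x - (-m)) := by
        congr 1; funext x
        have : gpdf (-x - m) = gpdf (x + m) := by rw [← gpdf_even (x + m)]; ring_nf
        rw [this]; ring_nf
    _ = gpdf (c - (-m)) + (-m) * QT (c - (-m)) := int_mul_gpdf_Ioi c (-m)
    _ = gpdf (c + m) - m * QT (c + m) := by ring_nf

lemma int_tail_gpdf (m c : ℝ) (hc : 0 < c) :
    ∫ x in {y : ℝ | c < |y|}, gpdf (x - m) = Bfun m c := by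
  rw [tail_set_eq]
  rw [setIntegral_union (by
      rw [Set.disjoint_left]; intro x hx hx'
      simp only [Set.mem_Iio, Set.mem_Ioi] at hx hx'; linarith)
    measurableSet_Ioi (integrable_gpdf_sub m).integrableOn (integrable_gpdf_sub m).integrableOn]
  rw [int_Iio_gpdf, int_gpdf_Ioi, Bfun]
  ring

lemma int_tail_abs_gpdf (m c : ℝ) (hc : 0 < c) :
    ∫ x in {y : ℝ | c < |y|}, |x| * gpdf (x - m) = Afun m c := by
  rw [tail_set_eq]
  have hint : Integrable (fun x => |x| * gpdf (x - m)) := by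
    have h1 := (integrable_mul_gpdf_sub m).abs
    refine h1.congr (Eventually.of_forall fun x => ?_)
    dsimp only
    rw [abs_mul, abs_of_pos (gpdf_pos _)]
  rw [setIntegral_union (by
      rw [Set.disjoint_left]; intro x hx hx'
      simp only [Set.mem_Iio, Set.mem_Ioi] at hx hx'; linarith)
    measurableSet_Ioi hint.integrableOn hint.integrableOn]
  have e1 : ∫ x in Set.Iio (-c), |x| * gpdf (x - m) = ∫ x in Set.Iio (-c), (-x) * gpdf (x - m) := by
    apply setIntegral_congr_fun measurableSet_Iio
    intro x hx
    simp only [Set.mem_Iio] at hx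
    dsimp only
    rw [abs_of_neg (by linarith : x < 0)]
  have e2 : ∫ x in Set.Ioi c, |x| * gpdf (x - m) = ∫ x in Set.Ioi c, x * gpdf (x - m) := by
    apply setIntegral_congr_fun measurableSet_Ioi
    intro x hx
    simp only [Set.mem_Ioi] at hx
    dsimp only
    rw [abs_of_pos (by linarith : 0 < x)]
  rw [e1, e2, int_Iio_mul_gpdf, int_mul_gpdf_Ioi, Afun]
  ring



lemma gauss_tail_toReal (m c : ℝ) (hc : 0 < c) :
    ((gaussianReal m 1) {y : ℝ | c < |y|}).toReal = Bfun m c := by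
  rw [gaussianReal_apply_eq_integral m one_ne_zero]
  rw [ENNReal.toReal_ofReal (by
    apply integral_nonneg
    intro x; exact gaussianPDFReal_nonneg m 1 x)]
  rw [← int_tail_gpdf m c hc]
  apply setIntegral_congr_fun (measurableSet_tail c)
  intro x _
  exact gaussianPDFReal_one_eq m x

lemma gauss_tail_integral (m c : ℝ) (hc : 0 < c) :
    ∫ y in {y : ℝ | c < |y|}, |y| ∂(gaussianReal m 1) = Afun m c := by
  rw [gaussianReal_of_var_ne_zero m one_ne_zero]
  have hpdf : (gaussianPDF m 1) = fun x => ((Real.toNNReal (gaussianPDFReal m 1 x) : ℝ≥0) : ℝ≥0∞) := by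
    funext x; rfl
  rw [hpdf]
  rw [setIntegral_withDensity_eq_setIntegral_smul
    ((measurable_gaussianPDFReal m 1).real_toNNReal) _ (measurableSet_tail c)]
  rw [← int_tail_abs_gpdf m c hc]
  apply setIntegral_congr_fun (measurableSet_tail c)
  intro x _
  simp only [NNReal.smul_def, smul_eq_mul]
  rw [Real.coe_toNNReal _ (gaussianPDFReal_nonneg m 1 x), gaussianPDFReal_one_eq]
  ring

lemma gauss_eq_map (β se : ℝ) (hse : 0 < se) :
    gauss β se = Measure.map (fun y => se * y) (gaussianReal (β/se) 1) := by
  have h := gaussianReal_map_const_mul (μ := β/se) (v := 1) se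
  have h1 : se * (β / se) = β := by field_simp
  have h2 : (⟨se^2, sq_nonneg se⟩ : ℝ≥0) * 1 = Real.toNNReal (se ^ 2) := by
    ext
    simp [Real.toNNReal, max_eq_left (sq_nonneg se)]
  rw [h1] at h
  rw [gauss, h]; congr 1; exact h2.symm

lemma tail_preimage (se c : ℝ) (hse : 0 < se) :
    (fun y => se * y) ⁻¹' {x : ℝ | c < |x| / se} = {y : ℝ | c < |y|} := by
  ext y
  simp only [Set.mem_preimage, Set.mem_setOf_eq]
  rw [abs_mul, abs_of_pos hse, lt_div_iff₀ hse]
  constructor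
  · intro h; nlinarith
  · intro h; nlinarith

lemma condMean_eq (β se c : ℝ) (hse : 0 < se) (hc : 0 < c) :
    condMean β se c = se * Afun (β/se) c / Bfun (β/se) c := by
  have hS : MeasurableSet {x : ℝ | c < |x| / se} := by
    have : {x : ℝ | c < |x| / se} = (fun x : ℝ => |x| / se) ⁻¹' (Set.Ioi c) := rfl
    rw [this]
    exact ((_root_.continuous_abs.div_const se).measurable) measurableSet_Ioi
  have hemb : MeasurableEmbedding (fun y : ℝ => se * y) :=
    (Homeomorph.mulLeft₀ se hse.ne').toMeasurableEquiv.measurableEmbedding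
  rw [condMean, gauss_eq_map β se hse]
  rw [hemb.setIntegral_map (fun x => |x|) _]
  rw [Measure.map_apply hemb.measurable hS]
  rw [tail_preimage se c hse]
  have hnum : ∫ y in {y : ℝ | c < |y|}, |se * y| ∂(gaussianReal (β/se) 1)
      = se * Afun (β/se) c := by
    have : ∀ y : ℝ, |se * y| = se * |y| := by
      intro y; rw [abs_mul, abs_of_pos hse]
    calc ∫ y in {y : ℝ | c < |y|}, |se * y| ∂(gaussianReal (β/se) 1)
        = ∫ y in {y : ℝ | c < |y|}, se * |y| ∂(gaussianReal (β/se) 1) := by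
          apply setIntegral_congr_fun (measurableSet_tail c); intro y _; exact this y
      _ = se * ∫ y in {y : ℝ | c < |y|}, |y| ∂(gaussianReal (β/se) 1) := integral_const_mul se _
      _ = se * Afun (β/se) c := by rw [gauss_tail_integral _ c hc]
  rw [hnum, gauss_tail_toReal _ c hc]

noncomputable def exf (m c : ℝ) : ℝ := Afun m c / (m * Bfun m c)


lemma hasDerivAt_gpdf (x : ℝ) : HasDerivAt gpdf (-(x * gpdf x)) x := by
  simpa using (hasDerivAt_neg_gpdf x).fun_neg

-- derivatives in m (c fixed)
lemma hasDerivAt_Afun_m (c m : ℝ) :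
    HasDerivAt (fun m => Afun m c)
      ((QT (c - m) - QT (c + m)) + c * (gpdf (c - m) - gpdf (c + m))) m := by
  have hsub : HasDerivAt (fun m : ℝ => c - m) (-1) m := by
    simpa using (hasDerivAt_const m c).fun_sub (hasDerivAt_id m)
  have hadd : HasDerivAt (fun m : ℝ => c + m) 1 m := by
    simpa using (hasDerivAt_const m c).fun_add (hasDerivAt_id m)
  have h1 : HasDerivAt (fun m => gpdf (c - m)) ((c - m) * gpdf (c - m)) m := by
    have := (hasDerivAt_gpdf (c - m)).comp m hsub
    exact this.congr_deriv (by ring)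
  have h2 : HasDerivAt (fun m => gpdf (c + m)) (-((c + m) * gpdf (c + m))) m := by
    have := (hasDerivAt_gpdf (c + m)).comp m hadd
    exact this.congr_deriv (by ring)
  have h3 : HasDerivAt (fun m => QT (c - m)) (gpdf (c - m)) m := by
    have := (hasDerivAt_QT (c - m)).comp m hsub
    exact this.congr_deriv (by ring)
  have h4 : HasDerivAt (fun m => QT (c + m)) (-gpdf (c + m)) m := by
    have := (hasDerivAt_QT (c + m)).comp m hadd
    exact this.congr_deriv (by ring)
  have h5 := ((hasDerivAt_id m).fun_mul (h3.fun_sub h4))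
  have := (h1.fun_add h2).fun_add h5
  refine this.congr_deriv ?_
  simp only [id_eq]
  ring

lemma hasDerivAt_mB_m (c m : ℝ) :
    HasDerivAt (fun m => m * Bfun m c)
      (Bfun m c + m * (gpdf (c - m) - gpdf (c + m))) m := by
  have hsub : HasDerivAt (fun m : ℝ => c - m) (-1) m := by
    simpa using (hasDerivAt_const m c).fun_sub (hasDerivAt_id m)
  have hadd : HasDerivAt (fun m : ℝ => c + m) 1 m := by
    simpa using (hasDerivAt_const m c).fun_add (hasDerivAt_id m)
  have h3 : HasDerivAt (fun m => QT (c - m)) (gpdf (c - m)) m := by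
    have := (hasDerivAt_QT (c - m)).comp m hsub
    exact this.congr_deriv (by ring)
  have h4 : HasDerivAt (fun m => QT (c + m)) (-gpdf (c + m)) m := by
    have := (hasDerivAt_QT (c + m)).comp m hadd
    exact this.congr_deriv (by ring)
  have := (hasDerivAt_id m).fun_mul (h3.fun_add h4)
  refine this.congr_deriv ?_
  simp only [id_eq]
  unfold Bfun; ring

lemma gpdf_sub_nonneg (m c : ℝ) (hm : 0 ≤ m) (hc : 0 ≤ c) :
    0 ≤ gpdf (c - m) - gpdf (c + m) := by
  have : (c - m)^2 ≤ (c + m)^2 := by nlinarith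
  linarith [gpdf_le_gpdf this]

lemma hasDerivAt_exf_m (c m : ℝ) (hm : 0 < m) :
    HasDerivAt (fun m => exf m c)
      ((((QT (c - m) - QT (c + m)) + c * (gpdf (c - m) - gpdf (c + m))) * (m * Bfun m c)
        - Afun m c * (Bfun m c + m * (gpdf (c - m) - gpdf (c + m)))) / (m * Bfun m c)^2) m := by
  exact (hasDerivAt_Afun_m c m).div (hasDerivAt_mB_m c m)
    (mul_ne_zero hm.ne' (Bfun_pos m c).ne')

lemma exf_deriv_m_neg (c m : ℝ) (hm : 0 < m) (hc : 0 < c) :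
    (((QT (c - m) - QT (c + m)) + c * (gpdf (c - m) - gpdf (c + m))) * (m * Bfun m c)
        - Afun m c * (Bfun m c + m * (gpdf (c - m) - gpdf (c + m)))) / (m * Bfun m c)^2 < 0 := by
  have hB := Bfun_pos m c
  apply div_neg_of_neg_of_pos _ (by positivity)
  -- numerator = m*(a-b)*(c*B - A) - (a+b)*B
  have hiden : ((QT (c - m) - QT (c + m)) + c * (gpdf (c - m) - gpdf (c + m))) * (m * Bfun m c)
      - Afun m c * (Bfun m c + m * (gpdf (c - m) - gpdf (c + m)))
      = m * (gpdf (c - m) - gpdf (c + m)) * (c * Bfun m c - Afun m c)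
        - (gpdf (c - m) + gpdf (c + m)) * Bfun m c := by
    unfold Afun Bfun; ring
  rw [hiden]
  have h1 : 0 ≤ gpdf (c - m) - gpdf (c + m) := gpdf_sub_nonneg m c hm.le hc.le
  have h2 : c * Bfun m c - Afun m c < 0 := sub_neg.mpr (Afun_gt_cB m c)
  have h3 : 0 < (gpdf (c - m) + gpdf (c + m)) * Bfun m c := by
    have := gpdf_pos (c - m); have := gpdf_pos (c + m); positivity
  have h4 : m * (gpdf (c - m) - gpdf (c + m)) * (c * Bfun m c - Afun m c) ≤ 0 :=
    mul_nonpos_of_nonneg_of_nonpos (mul_nonneg hm.le h1) h2.le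
  linarith

lemma exf_strictAntiOn (c : ℝ) (hc : 0 < c) :
    StrictAntiOn (fun m => exf m c) (Set.Ioi 0) := by
  apply strictAntiOn_of_deriv_neg (convex_Ioi 0)
  · intro m hm
    exact ((hasDerivAt_exf_m c m hm).continuousAt.continuousWithinAt)
  · intro m hm
    rw [interior_Ioi] at hm
    rw [(hasDerivAt_exf_m c m hm).deriv]
    exact exf_deriv_m_neg c m hm hc

-- derivatives in c (m fixed)
lemma hasDerivAt_Afun_c (m c : ℝ) :
    HasDerivAt (fun c => Afun m c) (-(c * (gpdf (c - m) + gpdf (c + m)))) c := by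
  have hsub : HasDerivAt (fun c : ℝ => c - m) 1 c := by
    simpa using (hasDerivAt_id c).fun_sub (hasDerivAt_const c m)
  have hadd : HasDerivAt (fun c : ℝ => c + m) 1 c := by
    simpa using (hasDerivAt_id c).fun_add (hasDerivAt_const c m)
  have h1 : HasDerivAt (fun c => gpdf (c - m)) (-((c - m) * gpdf (c - m))) c := by
    have := (hasDerivAt_gpdf (c - m)).comp c hsub
    exact this.congr_deriv (by ring)
  have h2 : HasDerivAt (fun c => gpdf (c + m)) (-((c + m) * gpdf (c + m))) c := by
    have := (hasDerivAt_gpdf (c + m)).comp c hadd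
    exact this.congr_deriv (by ring)
  have h3 : HasDerivAt (fun c => QT (c - m)) (-gpdf (c - m)) c := by
    have := (hasDerivAt_QT (c - m)).comp c hsub
    exact this.congr_deriv (by ring)
  have h4 : HasDerivAt (fun c => QT (c + m)) (-gpdf (c + m)) c := by
    have := (hasDerivAt_QT (c + m)).comp c hadd
    exact this.congr_deriv (by ring)
  have h5 := (hasDerivAt_const c m).fun_mul (h3.fun_sub h4)
  have := (h1.fun_add h2).fun_add h5
  refine this.congr_deriv ?_
  ring

lemma hasDerivAt_mB_c (m c : ℝ) :
    HasDerivAt (fun c => m * Bfun m c) (m * (-gpdf (c - m) + -gpdf (c + m))) c := by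
  have hsub : HasDerivAt (fun c : ℝ => c - m) 1 c := by
    simpa using (hasDerivAt_id c).fun_sub (hasDerivAt_const c m)
  have hadd : HasDerivAt (fun c : ℝ => c + m) 1 c := by
    simpa using (hasDerivAt_id c).fun_add (hasDerivAt_const c m)
  have h3 : HasDerivAt (fun c => QT (c - m)) (-gpdf (c - m)) c := by
    have := (hasDerivAt_QT (c - m)).comp c hsub
    exact this.congr_deriv (by ring)
  have h4 : HasDerivAt (fun c => QT (c + m)) (-gpdf (c + m)) c := by
    have := (hasDerivAt_QT (c + m)).comp c hadd
    exact this.congr_deriv (by ring)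
  exact (h3.fun_add h4).const_mul m

lemma exf_strictMonoOn (m : ℝ) (hm : 0 < m) :
    StrictMonoOn (fun c => exf m c) (Set.Ioi 0) := by
  have hd : ∀ c : ℝ, HasDerivAt (fun c => exf m c)
      ((-(c * (gpdf (c - m) + gpdf (c + m))) * (m * Bfun m c)
        - Afun m c * (m * (-gpdf (c - m) + -gpdf (c + m)))) / (m * Bfun m c)^2) c := by
    intro c
    exact (hasDerivAt_Afun_c m c).div (hasDerivAt_mB_c m c)
      (mul_ne_zero hm.ne' (Bfun_pos m c).ne')
  apply strictMonoOn_of_deriv_pos (convex_Ioi 0)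
  · intro c _
    exact (hd c).continuousAt.continuousWithinAt
  · intro c hc
    rw [interior_Ioi] at hc
    rw [(hd c).deriv]
    apply div_pos _ (pow_pos (mul_pos hm (Bfun_pos m c)) 2)
    have hiden : (-(c * (gpdf (c - m) + gpdf (c + m))) * (m * Bfun m c)
        - Afun m c * (m * (-gpdf (c - m) + -gpdf (c + m))))
        = m * (gpdf (c - m) + gpdf (c + m)) * (Afun m c - c * Bfun m c) := by ring
    rw [hiden]
    have h1 := gpdf_pos (c - m); have h2 := gpdf_pos (c + m)
    have h3 := Afun_gt_cB m c
    have : 0 < Afun m c - c * Bfun m c := by linarith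
    positivity

lemma Afun_abs (m c : ℝ) : Afun |m| c = Afun m c := by
  rcases abs_cases m with ⟨h, _⟩ | ⟨h, _⟩
  · rw [h]
  · rw [h, Afun_even]

lemma Bfun_abs (m c : ℝ) : Bfun |m| c = Bfun m c := by
  rcases abs_cases m with ⟨h, _⟩ | ⟨h, _⟩
  · rw [h]
  · rw [h, Bfun_even]

lemma exagg_eq_exf (β se c : ℝ) (hse : 0 < se) (hβ : β ≠ 0) (hc : 0 < c) :
    exagg β se c = exf (|β|/se) c := by
  have habs : |β| / se = |β / se| := by
    rw [abs_div, abs_of_pos hse]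
  rw [exagg, condMean_eq β se c hse hc, exf, habs, Afun_abs, Bfun_abs]
  have hβ' : |β| = se * |β / se| := by
    rw [abs_div, abs_of_pos hse]; field_simp
  rw [hβ']
  have hBpos := Bfun_pos (β/se) c
  have hse' : se ≠ 0 := hse.ne'
  field_simp

lemma relBias_eq (β se c : ℝ) (hβ : β ≠ 0) :
    relBias β se c = exagg β se c - 1 := by
  rw [relBias, exagg, sub_div, div_self (abs_ne_zero.mpr hβ)]

lemma exf_gt_one (m c : ℝ) (hm : 0 < m) (hc : 0 < c) : 1 < exf m c := by
  rw [exf, lt_div_iff₀ (mul_pos hm (Bfun_pos m c)), one_mul]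
  exact Afun_gt_mB m c hm hc

lemma snr_pos {β se : ℝ} (hse : 0 < se) (hβ : β ≠ 0) : 0 < |β| / se :=
  div_pos (abs_pos.mpr hβ) hse

/-- For `b ~ N(β, se²)` with `se > 0`, `β ≠ 0`, `c > 0`: the relative conditional
bias is strictly positive and the exaggeration factor exceeds 1; both depend on
`(β, se)` only through the SNR `|β|/se`; both are decreasing in the SNR and
increasing in `c`. -/
theorem relBias_and_exagg_properties :
    (∀ β se c : ℝ, 0 < se → β ≠ 0 → 0 < c →
      0 < relBias β se c ∧ 1 < exagg β se c) ∧
    (∀ β₁ se₁ β₂ se₂ c : ℝ, 0 < se₁ → β₁ ≠ 0 → 0 < se₂ → β₂ ≠ 0 → 0 < c →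
      |β₁| / se₁ = |β₂| / se₂ →
      relBias β₁ se₁ c = relBias β₂ se₂ c ∧ exagg β₁ se₁ c = exagg β₂ se₂ c) ∧
    (∀ β₁ se₁ β₂ se₂ c : ℝ, 0 < se₁ → β₁ ≠ 0 → 0 < se₂ → β₂ ≠ 0 → 0 < c →
      |β₁| / se₁ ≤ |β₂| / se₂ →
      relBias β₂ se₂ c ≤ relBias β₁ se₁ c ∧ exagg β₂ se₂ c ≤ exagg β₁ se₁ c) ∧
    (∀ β se c₁ c₂ : ℝ, 0 < se → β ≠ 0 → 0 < c₁ → c₁ ≤ c₂ →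
      relBias β se c₁ ≤ relBias β se c₂ ∧ exagg β se c₁ ≤ exagg β se c₂) := by
  refine ⟨?_, ?_, ?_, ?_⟩
  · intro β se c hse hβ hc
    have h := exf_gt_one (|β|/se) c (snr_pos hse hβ) hc
    rw [← exagg_eq_exf β se c hse hβ hc] at h
    rw [relBias_eq β se c hβ]
    exact ⟨by linarith, h⟩
  · intro β₁ se₁ β₂ se₂ c h1 h2 h3 h4 hc hsnr
    have e1 := exagg_eq_exf β₁ se₁ c h1 h2 hc
    have e2 := exagg_eq_exf β₂ se₂ c h3 h4 hc
    have heq : exagg β₁ se₁ c = exagg β₂ se₂ c := by rw [e1, e2, hsnr]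
    exact ⟨by rw [relBias_eq _ _ _ h2, relBias_eq _ _ _ h4, heq], heq⟩
  · intro β₁ se₁ β₂ se₂ c h1 h2 h3 h4 hc hsnr
    have e1 := exagg_eq_exf β₁ se₁ c h1 h2 hc
    have e2 := exagg_eq_exf β₂ se₂ c h3 h4 hc
    have hanti := (exf_strictAntiOn c hc).antitoneOn
    have hle : exagg β₂ se₂ c ≤ exagg β₁ se₁ c := by
      rw [e1, e2]
      exact hanti (snr_pos h1 h2) (snr_pos h3 h4) hsnr
    exact ⟨by rw [relBias_eq _ _ _ h2, relBias_eq _ _ _ h4]; linarith, hle⟩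
  · intro β se c₁ c₂ hse hβ hc₁ hcc
    have hc₂ : 0 < c₂ := lt_of_lt_of_le hc₁ hcc
    have e1 := exagg_eq_exf β se c₁ hse hβ hc₁
    have e2 := exagg_eq_exf β se c₂ hse hβ hc₂
    have hmono := (exf_strictMonoOn (|β|/se) (snr_pos hse hβ)).monotoneOn
    have hle : exagg β se c₁ ≤ exagg β se c₂ := by
      rw [e1, e2]
      exact hmono hc₁ hc₂ hcc
    exact ⟨by rw [relBias_eq _ _ _ hβ, relBias_eq _ _ _ hβ]; linarith, hle⟩
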